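/- Let H^A, H^B be simplicial complexes, f: V(H^A)ⁿ → V(H^B) a map such that for all faces σ₁, …, σₙ of H^A the set f(σ₁, …, σₙ) = { f(t₁, …, tₙ) : t_i ∈ σ_i } is a face of H^B, and let C = t₁, …, t_k, t₁ be a cycle in G(H^A) (indices taken cyclically modulo k). Let P₁ = v, a₁⁺, …, a_s⁺ and P₂ = v, b₁⁺, …, b_s⁺ be normal f-paths starting at the same vertex v, where the sequence b₁, …, b_s is a permutation (rearrangement) of the sequence a₁, …, a_s. Then P₁ and P₂ are paths in H^B with the same endpoints, and P₁ and P₂ are homotopic in H^B. -/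

import Mathlib

/-- A (combinatorial) simplicial complex on the vertex set `V`: a downward-closed
family of nonempty finite sets (faces) containing every singleton. -/
structure SComplex (V : Type*) where
  faces : Set (Finset V)
  down_closed : ∀ σ ∈ faces, ∀ τ : Finset V, τ ⊆ σ → τ.Nonempty → τ ∈ faces
  singleton_mem : ∀ v : V, {v} ∈ faces

namespace SComplex

variable {V : Type*} (K : SComplex V)

/-- Two vertices lie in a common face (adjacency in the graph `G(H)`,
allowing `u = v`). -/
def inFace (u v : V) : Prop := ∃ σ ∈ K.faces, u ∈ σ ∧ v ∈ σ

/-- A path: a nonempty sequence of vertices, every two consecutive of which lie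
in a common face. -/
def IsPath (p : List V) : Prop := p ≠ [] ∧ p.Chain' K.inFace

/-- A cycle based at `t`: a path starting and ending at `t`. -/
def IsCycleAt (t : V) (p : List V) : Prop :=
  K.IsPath p ∧ p.head? = some t ∧ p.getLast? = some t

/-- One elementary expansion: insert a vertex `x` between consecutive vertices
`a, b` provided `a, x, b` lie in a common face. -/
inductive Step : List V → List V → Prop
  | expand (l₁ l₂ : List V) (a x b : V)
      (h : ∃ σ ∈ K.faces, a ∈ σ ∧ x ∈ σ ∧ b ∈ σ) :
      Step (l₁ ++ a :: b :: l₂) (l₁ ++ a :: x :: b :: l₂)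

/-- Two paths are homotopic if one can be transformed into the other by a finite
sequence of expansions and contractions. -/
def Homotopic : List V → List V → Prop :=
  Relation.ReflTransGen (fun p q => K.Step p q ∨ K.Step q p)

/-- Reachability in the graph `G(H)`. -/
def Reach : V → V → Prop := Relation.ReflTransGen K.inFace

/-- A maximal face. -/
def IsMaxFace (σ : Finset V) : Prop :=
  σ ∈ K.faces ∧ ∀ τ ∈ K.faces, σ ⊆ τ → τ = σ

end SComplex

/-- The list of vertices of the normal `f`-path determined by the cycle `c`
(of length `k`, indexed cyclically), the starting argument-position tuple
`pos : Fin n → ZMod k`, and the list `a` of coordinate steps: at each step the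
entry in the given coordinate advances one position along the cycle. -/
def normalPath {VA VB : Type*} {n k : ℕ} (f : (Fin n → VA) → VB)
    (c : ZMod k → VA) : (Fin n → ZMod k) → List (Fin n) → List VB
  | pos, [] => [f fun i => c (pos i)]
  | pos, j :: rest =>
      f (fun i => c (pos i)) ::
        normalPath f c (Function.update pos j (pos j + 1)) rest


section Aux
variable {VA VB : Type*} {KA : SComplex VA} {KB : SComplex VB} {n k : ℕ}
  {f : (Fin n → VA) → VB} {c : ZMod k → VA}

theorem normalPath_head (pos : Fin n → ZMod k) (a : List (Fin n)) :
    (normalPath f c pos a).head? = some (f fun i => c (pos i)) := by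
  cases a <;> rfl

theorem normalPath_ne_nil (pos : Fin n → ZMod k) (a : List (Fin n)) :
    normalPath f c pos a ≠ [] := by
  cases a <;> simp [normalPath]

theorem normalPath_getLast (pos : Fin n → ZMod k) (a : List (Fin n)) :
    (normalPath f c pos a).getLast? =
      some (f fun i => c (pos i + (a.count i : ZMod k))) := by
  induction a generalizing pos with
  | nil => simp [normalPath]
  | cons j rest ih =>
      rw [normalPath]
      obtain ⟨y, ys, hys⟩ := List.exists_cons_of_ne_nil
        (normalPath_ne_nil (f := f) (c := c) (Function.update pos j (pos j + 1)) rest)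
      rw [hys, List.getLast?_cons_cons, ← hys, ih]
      congr 2
      funext i
      rcases eq_or_ne i j with h | h
      · subst h
        simp [Function.update_apply, List.count_cons]
        ring_nf
      · simp [Function.update_apply, h, Ne.symm h, List.count_cons]

theorem exists_face_normal
    (hf : ∀ σ : Fin n → Finset VA, (∀ i, σ i ∈ KA.faces) →
        ∃ τ ∈ KB.faces, (↑τ : Set VB) =
          {b : VB | ∃ t : Fin n → VA, (∀ i, t i ∈ σ i) ∧ b = f t})
    (hc : ∀ i : ZMod k, KA.inFace (c i) (c (i + 1)))
    (pos : Fin n → ZMod k) :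
    ∃ τ ∈ KB.faces, ∀ ε : Fin n → Bool,
      f (fun i => c (pos i + if ε i then 1 else 0)) ∈ τ := by
  simp only [SComplex.inFace] at hc
  choose σ hσ h0 h1 using hc
  obtain ⟨τ, hτ, heq⟩ := hf (fun i => σ (pos i)) (fun i => hσ (pos i))
  refine ⟨τ, hτ, fun ε => ?_⟩
  have : f (fun i => c (pos i + if ε i then 1 else 0)) ∈ (↑τ : Set VB) := by
    rw [heq]
    exact ⟨_, fun i => by rcases hε : ε i with _ | _ <;> simp [hε, h0, h1], rfl⟩
  exact_mod_cast this

theorem c_update_eq (pos : Fin n → ZMod k) (j : Fin n) :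
    (fun i => c (Function.update pos j (pos j + 1) i)) =
      fun i => c (pos i + if (i = j : Bool) then 1 else 0) := by
  funext i
  rcases eq_or_ne i j with h | h <;> simp [Function.update_apply, h]

theorem normalPath_chain
    (hf : ∀ σ : Fin n → Finset VA, (∀ i, σ i ∈ KA.faces) →
        ∃ τ ∈ KB.faces, (↑τ : Set VB) =
          {b : VB | ∃ t : Fin n → VA, (∀ i, t i ∈ σ i) ∧ b = f t})
    (hc : ∀ i : ZMod k, KA.inFace (c i) (c (i + 1)))
    (pos : Fin n → ZMod k) (a : List (Fin n)) :
    (normalPath f c pos a).Chain' KB.inFace := by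
  induction a generalizing pos with
  | nil => simp [normalPath, List.Chain', List.isChain_singleton]
  | cons j rest ih =>
      rw [normalPath]; unfold List.Chain'; rw [List.isChain_cons]
      refine ⟨?_, ih _⟩
      intro y hy
      rw [normalPath_head] at hy
      obtain ⟨τ, hτ, hmem⟩ := exists_face_normal hf hc pos
      refine ⟨τ, hτ, ?_, ?_⟩
      · have := hmem (fun _ => false)
        simpa using this
      · simp only [Option.mem_def, Option.some.injEq] at hy
        subst hy
        rw [c_update_eq]
        exact hmem _

theorem step_cons {p q : List VB} (x : VB) (h : KB.Step p q) :
    KB.Step (x :: p) (x :: q) := by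
  cases h with
  | expand l₁ l₂ a x' b hh =>
      exact SComplex.Step.expand (x :: l₁) l₂ a x' b hh

theorem homotopic_cons {p q : List VB} (x : VB) (h : KB.Homotopic p q) :
    KB.Homotopic (x :: p) (x :: q) := by
  induction h with
  | refl => exact .refl
  | tail h₁ h₂ ih => exact ih.tail (h₂.imp (step_cons x) (step_cons x))

theorem normalPath_homotopic
    (hf : ∀ σ : Fin n → Finset VA, (∀ i, σ i ∈ KA.faces) →
        ∃ τ ∈ KB.faces, (↑τ : Set VB) =
          {b : VB | ∃ t : Fin n → VA, (∀ i, t i ∈ σ i) ∧ b = f t})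
    (hc : ∀ i : ZMod k, KA.inFace (c i) (c (i + 1)))
    (a b : List (Fin n)) (hab : a.Perm b) (pos : Fin n → ZMod k) :
    KB.Homotopic (normalPath f c pos a) (normalPath f c pos b) := by
  induction hab generalizing pos with
  | nil => exact .refl
  | cons j h ih =>
      rw [normalPath, normalPath]
      exact homotopic_cons _ (ih _)
  | swap x y l =>
      rcases eq_or_ne x y with rfl | hxy
      · exact .refl
      · -- normalPath pos (y :: x :: l) vs normalPath pos (x :: y :: l)
        have hup : Function.update (Function.update pos y (pos y + 1)) x
              ((Function.update pos y (pos y + 1)) x + 1) =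
            Function.update (Function.update pos x (pos x + 1)) y
              ((Function.update pos x (pos x + 1)) y + 1) := by
          funext i
          rcases eq_or_ne i x with rfl | hix
          · simp [Function.update_apply, hxy]
          · rcases eq_or_ne i y with rfl | hiy
            · simp [Function.update_apply, hxy.symm, Ne.symm hxy]
            · simp [Function.update_apply, hix, hiy]
        simp only [normalPath]
        rw [hup]
        set pos2 := Function.update (Function.update pos x (pos x + 1)) y
              ((Function.update pos x (pos x + 1)) y + 1) with hpos2
        obtain ⟨z, zs, hz⟩ := List.exists_cons_of_ne_nil
          (normalPath_ne_nil (f := f) (c := c) pos2 l)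
        have hzval : z = f fun i => c (pos2 i) := by
          have := normalPath_head (f := f) (c := c) pos2 l
          rw [hz] at this
          exact Option.some.inj this
        obtain ⟨τ, hτ, hmem⟩ := exists_face_normal hf hc pos
        have hu : f (fun i => c (pos i)) ∈ τ := by simpa using hmem (fun _ => false)
        have hx : f (fun i => c (Function.update pos x (pos x + 1) i)) ∈ τ := by
          rw [c_update_eq]; exact hmem _
        have hy' : f (fun i => c (Function.update pos y (pos y + 1) i)) ∈ τ := by
          rw [c_update_eq]; exact hmem _
        have hz' : z ∈ τ := by
          rw [hzval]
          have h2 : pos2 = fun i => pos i + if (i = x || i = y : Bool) then 1 else 0 := by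
            funext i
            rcases eq_or_ne i x with rfl | hix
            · simp [hpos2, Function.update_apply, hxy]
            · rcases eq_or_ne i y with rfl | hiy
              · simp [hpos2, Function.update_apply, Ne.symm hxy]
              · simp [hpos2, Function.update_apply, hix, hiy]
          rw [h2]
          exact hmem fun i => (i = x || i = y : Bool)
        rw [hz]
        set u := f (fun i => c (pos i))
        have s1 : KB.Step (u :: z :: zs)
            (u :: (f fun i => c (Function.update pos y (pos y + 1) i)) :: z :: zs) :=
          SComplex.Step.expand [] zs u _ z ⟨τ, hτ, hu, hy', hz'⟩
        have s2 : KB.Step (u :: z :: zs)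
            (u :: (f fun i => c (Function.update pos x (pos x + 1) i)) :: z :: zs) :=
          SComplex.Step.expand [] zs u _ z ⟨τ, hτ, hu, hx, hz'⟩
        refine Relation.ReflTransGen.trans (b := u :: z :: zs) (Relation.ReflTransGen.single ?_) (Relation.ReflTransGen.single ?_)
        · exact Or.inr s1
        · exact Or.inl s2
  | trans h₁ h₂ ih₁ ih₂ => exact (ih₁ pos).trans (ih₂ pos)

end Aux

/-- let `f : V(H^A)ⁿ → V(H^B)` map products of faces to faces and
let `C = t₁, …, t_k, t₁` be a cycle in `G(H^A)` (given by `c : ZMod k → V(H^A)`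
with consecutive vertices adjacent). If `P₁ = v, a₁⁺, …, a_s⁺` and
`P₂ = v, b₁⁺, …, b_s⁺` are normal `f`-paths starting at the same vertex `v`
(with the same argument tuple), where `b₁, …, b_s` is a permutation of
`a₁, …, a_s`, then `P₁` and `P₂` are paths in `H^B` with the same endpoints, and
they are homotopic in `H^B`. -/
theorem normal_fPaths_perm_homotopic {VA VB : Type*}
    (KA : SComplex VA) (KB : SComplex VB) {n : ℕ}
    (f : (Fin n → VA) → VB)
    (hf : ∀ σ : Fin n → Finset VA, (∀ i, σ i ∈ KA.faces) →
        ∃ τ ∈ KB.faces, (↑τ : Set VB) =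
          {b : VB | ∃ t : Fin n → VA, (∀ i, t i ∈ σ i) ∧ b = f t})
    (k : ℕ) (hk : 0 < k) (c : ZMod k → VA)
    (hc : ∀ i : ZMod k, KA.inFace (c i) (c (i + 1)))
    (pos : Fin n → ZMod k) (a b : List (Fin n)) (hab : a.Perm b) :
    KB.IsPath (normalPath f c pos a) ∧ KB.IsPath (normalPath f c pos b) ∧
    (normalPath f c pos a).head? = (normalPath f c pos b).head? ∧
    (normalPath f c pos a).getLast? = (normalPath f c pos b).getLast? ∧
    KB.Homotopic (normalPath f c pos a) (normalPath f c pos b) := by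
  refine ⟨⟨normalPath_ne_nil _ _, normalPath_chain hf hc _ _⟩,
    ⟨normalPath_ne_nil _ _, normalPath_chain hf hc _ _⟩, ?_, ?_, ?_⟩
  · rw [normalPath_head, normalPath_head]
  · rw [normalPath_getLast, normalPath_getLast]
    congr 2
    funext i
    rw [hab.count_eq]
  · exact normalPath_homotopic hf hc a b hab pos
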